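/- Let k ≥ 2 be an integer and let P : ℝ² → ℝ be the degree-k homogeneous harmonic polynomial P(x,y) = Re((x+iy)^k) (in polar coordinates, P(r,θ) = r^k cos(kθ)). Then for a ∈ ℝ, the integral ∫_{B₁} |P(x)|^a dx over the unit disc is finite if and only if a > −2/k. -/

import Mathlib

open MeasureTheory Metric Filter

section ModelWeightAuxSection
open Set Real intervalIntegral

namespace ModelWeightAux


lemma cos_lower {t : ℝ} (h0 : 0 ≤ t) (h1 : t ≤ π) : 2 / π * |t - π / 2| ≤ |Real.cos t| := by
  have h : |Real.cos t| = |Real.sin (π / 2 - t)| := by rw [Real.sin_pi_div_two_sub]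
  rw [h, abs_sub_comm]
  exact Real.mul_abs_le_abs_sin (by rw [abs_sub_comm, abs_le]; constructor <;> linarith)

lemma meas_f (a : ℝ) : Measurable (fun t : ℝ => |Real.cos t| ^ a) :=
  (continuous_abs.comp Real.continuous_cos).measurable.pow measurable_const

lemma dom_integrable {a : ℝ} (ha : -1 < a) :
    IntegrableOn (fun t : ℝ => |t - π / 2| ^ a) (Ioo 0 π) := by
  have h1 : IntegrableOn (fun t : ℝ => |t - π / 2| ^ a) (Ioc 0 (π / 2)) := by
    have hbase : IntervalIntegrable (fun x : ℝ => x ^ a) volume (π / 2 - 0) (π / 2 - (π / 2)) :=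
      intervalIntegrable_rpow' ha
    have h2 : IntervalIntegrable (fun t : ℝ => (π / 2 - t) ^ a) volume 0 (π / 2) := by
      simpa using (intervalIntegrable_rpow' ha
        (a := π / 2 - 0) (b := π / 2 - π / 2)).comp_sub_left (π / 2)
    rw [intervalIntegrable_iff_integrableOn_Ioc_of_le (by positivity)] at h2
    apply h2.congr_fun ?_ measurableSet_Ioc
    intro t ht
    show (π / 2 - t) ^ a = |t - π / 2| ^ a
    rw [abs_sub_comm, abs_of_nonneg (by linarith [ht.2])]
  have h2 : IntegrableOn (fun t : ℝ => |t - π / 2| ^ a) (Ioc (π / 2) π) := by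
    have h2 : IntervalIntegrable (fun t : ℝ => (t - π / 2) ^ a) volume (π / 2) π := by
      have := (intervalIntegrable_rpow' ha (a := (0:ℝ)) (b := π / 2)).comp_sub_right (π / 2)
      simpa using this
    rw [intervalIntegrable_iff_integrableOn_Ioc_of_le (by linarith [pi_pos])] at h2
    apply h2.congr_fun ?_ measurableSet_Ioc
    intro t ht
    show (t - π / 2) ^ a = |t - π / 2| ^ a
    rw [abs_of_nonneg (by linarith [ht.1])]
  have := h1.union h2
  apply this.mono_set
  rw [Set.Ioc_union_Ioc_eq_Ioc (by positivity) (by linarith [pi_pos])]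
  exact Ioo_subset_Ioc_self

lemma base_ii {a : ℝ} (ha : -1 < a) :
    IntervalIntegrable (fun t : ℝ => |Real.cos t| ^ a) volume 0 π := by
  rcases le_or_gt 0 a with h0 | h0
  · exact (((continuous_abs.comp Real.continuous_cos).rpow_const
      (fun x => Or.inr h0)).intervalIntegrable 0 π)
  · rw [intervalIntegrable_iff_integrableOn_Ioo_of_le Real.pi_pos.le]
    have hg : IntegrableOn (fun t : ℝ => (2 / π) ^ a * |t - π / 2| ^ a) (Ioo 0 π) :=
      (dom_integrable ha).const_mul _
    apply hg.integrable.mono ((meas_f a).aestronglyMeasurable)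
    rw [ae_restrict_iff' measurableSet_Ioo]
    filter_upwards with t ht
    have hnn : (0:ℝ) ≤ |Real.cos t| ^ a := Real.rpow_nonneg (abs_nonneg _) _
    have hgn : (0:ℝ) ≤ (2 / π) ^ a * |t - π / 2| ^ a :=
      mul_nonneg (Real.rpow_nonneg (by positivity) _) (Real.rpow_nonneg (abs_nonneg _) _)
    rw [Real.norm_eq_abs, Real.norm_eq_abs, abs_of_nonneg hnn, abs_of_nonneg hgn]
    rw [← Real.mul_rpow (by positivity) (abs_nonneg _)]
    rcases eq_or_ne t (π / 2) with rfl | hne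
    · simp [Real.cos_pi_div_two, Real.zero_rpow h0.ne]
    · have hpos : 0 < 2 / π * |t - π / 2| := by
        have : t - π / 2 ≠ 0 := sub_ne_zero.mpr hne
        positivity
      exact Real.rpow_le_rpow_of_nonpos hpos (cos_lower ht.1.le ht.2.le) h0.le

lemma periodic_f (a : ℝ) : Function.Periodic (fun t : ℝ => |Real.cos t| ^ a) π := by
  intro t
  simp [Real.cos_add_pi, abs_neg]

lemma ii_sym {a : ℝ} (ha : -1 < a) (n : ℕ) :
    IntervalIntegrable (fun t : ℝ => |Real.cos t| ^ a) volume (-(n * π)) (n * π) := by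
  induction n with
  | zero => simp
  | succ n ih =>
    set f := fun t : ℝ => |Real.cos t| ^ a with hf
    have hper := periodic_f a
    have hR : IntervalIntegrable f volume (n * π) ((n + 1 : ℕ) * π) := by
      have := (base_ii ha).comp_sub_right (n * π)
      have heq : (fun x : ℝ => f (x - n * π)) = f := by
        funext x
        exact hper.sub_nat_mul_eq n
      rw [heq] at this
      have : IntervalIntegrable f volume (0 + n * π) (π + n * π) := this
      convert this using 1 <;> push_cast <;> ring
    have hL : IntervalIntegrable f volume (-((n + 1 : ℕ) * π)) (-(n * π)) := by
      have := (base_ii ha).comp_add_right ((n + 1 : ℕ) * π)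
      have heq : (fun x : ℝ => f (x + (n + 1 : ℕ) * π)) = f := by
        funext x
        exact (hper.nat_mul (n + 1)) x
      rw [heq] at this
      have : IntervalIntegrable f volume (0 - (n + 1 : ℕ) * π) (π - (n + 1 : ℕ) * π) := this
      convert this using 1 <;> push_cast <;> ring
    exact hL.trans (ih.trans hR)

lemma angular_integrable {a : ℝ} (ha : -1 < a) (k : ℕ) (hk : k ≠ 0) :
    IntegrableOn (fun θ : ℝ => |Real.cos ((k : ℝ) * θ)| ^ a) (Ioo (-π) π) := by
  have hkR : (k : ℝ) ≠ 0 := Nat.cast_ne_zero.mpr hk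
  have := (ii_sym ha k).comp_mul_left (c := (k : ℝ))
  rw [intervalIntegrable_iff_integrableOn_Ioo_of_le (by
    rw [neg_div]; have : 0 ≤ (k:ℝ) * π / k := by positivity
    linarith)] at this
  have h2 : (k:ℝ) * π / k = π := mul_div_cancel_left₀ π hkR
  have h1 : -((k:ℝ) * π) / k = -π := by rw [neg_div, h2]
  rwa [h1, h2] at this



lemma integrableOn_iff_lintegral {α : Type*} [MeasurableSpace α] {μ : Measure α} {f : α → ℝ}
    {s : Set α} (hm : Measurable f)
    (h0 : ∀ x ∈ s, 0 ≤ f x) (hs : MeasurableSet s) :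
    IntegrableOn f s μ ↔ (∫⁻ x in s, ENNReal.ofReal (f x) ∂μ) < ⊤ := by
  rw [IntegrableOn, Integrable, and_iff_right hm.aestronglyMeasurable,
    hasFiniteIntegral_iff_ofReal ((ae_restrict_iff' hs).2 (ae_of_all _ h0))]

lemma radial_lintegral_lt_top_iff (s : ℝ) :
    (∫⁻ r in Ioo (0:ℝ) 1, ENNReal.ofReal (r ^ s)) < ⊤ ↔ -1 < s := by
  have hm : Measurable fun r : ℝ => r ^ s := measurable_id.pow measurable_const
  rw [← integrableOn_iff_lintegral hm
    (fun x hx => Real.rpow_nonneg hx.1.le _) measurableSet_Ioo]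
  exact integrableOn_Ioo_rpow_iff zero_lt_one

lemma angular_lintegral_pos (k : ℕ) (hk : 1 ≤ k) (a : ℝ) :
    0 < ∫⁻ θ in Ioo (-π) π, ENNReal.ofReal (|Real.cos ((k : ℝ) * θ)| ^ a) := by
  set c : ℝ := min ((1/2 : ℝ) ^ a) 1 with hc
  have hcpos : 0 < c := lt_min (Real.rpow_pos_of_pos one_half_pos _) zero_lt_one
  have hkR : (0:ℝ) < k := Nat.cast_pos.mpr hk
  set S : Set ℝ := Ioo (0:ℝ) (π / (4 * k)) with hS
  have hSsub : S ⊆ Ioo (-π) π := by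
    intro θ hθ
    constructor
    · linarith [pi_pos, hθ.1]
    · have h1 : π / (4 * k) ≤ π := by
        rw [div_le_iff₀ (by positivity)]
        have hk1 : (1:ℝ) ≤ k := Nat.one_le_cast.mpr hk
        have : (1:ℝ) ≤ 4 * k := by nlinarith
        nlinarith [pi_pos]
      exact hθ.2.trans_le h1
  have hbound : ∀ θ ∈ S, ENNReal.ofReal c ≤ ENNReal.ofReal (|Real.cos ((k : ℝ) * θ)| ^ a) := by
    intro θ hθ
    apply ENNReal.ofReal_le_ofReal
    have h1 : (0:ℝ) < (k:ℝ) * θ := mul_pos hkR hθ.1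
    have h2 : (k:ℝ) * θ ≤ π / 3 := by
      have := hθ.2
      rw [hS, mem_Ioo] at hθ
      have h3 : (k:ℝ) * θ < π / 4 := by
        have := (lt_div_iff₀ (by positivity)).mp hθ.2
        nlinarith
      linarith [pi_pos]
    have hcos : (1/2 : ℝ) ≤ Real.cos ((k:ℝ) * θ) := by
      have := Real.cos_le_cos_of_nonneg_of_le_pi h1.le (by linarith [pi_pos]) h2
      rwa [Real.cos_pi_div_three] at this
    have habs : (1/2 : ℝ) ≤ |Real.cos ((k:ℝ) * θ)| := hcos.trans (le_abs_self _)
    rcases le_or_gt 0 a with ha | ha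
    · calc c ≤ (1/2 : ℝ) ^ a := min_le_left _ _
        _ ≤ |Real.cos ((k:ℝ) * θ)| ^ a := Real.rpow_le_rpow (by norm_num) habs ha
    · calc c ≤ 1 := min_le_right _ _
        _ = (1:ℝ) ^ a := (Real.one_rpow a).symm
        _ ≤ |Real.cos ((k:ℝ) * θ)| ^ a :=
          Real.rpow_le_rpow_of_nonpos (lt_of_lt_of_le one_half_pos habs) (abs_cos_le_one _) ha.le
  calc (0 : ENNReal) < ENNReal.ofReal c * volume S := by
        apply ENNReal.mul_pos (ENNReal.ofReal_pos.mpr hcpos).ne'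
        rw [hS, Real.volume_Ioo]
        simp only [ne_eq, ENNReal.ofReal_eq_zero, not_le, sub_zero]
        positivity
    _ = ∫⁻ _ in S, ENNReal.ofReal c := by rw [setLIntegral_const, mul_comm]
    _ ≤ ∫⁻ θ in S, ENNReal.ofReal (|Real.cos ((k : ℝ) * θ)| ^ a) := by
        apply setLIntegral_mono ?_ hbound
        exact (Measurable.pow (Real.continuous_cos.measurable.comp
          (measurable_const.mul measurable_id)).abs measurable_const).ennreal_ofReal
    _ ≤ _ := lintegral_mono_set hSsub



lemma key_transform (k : ℕ) (a : ℝ) :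
    (∫⁻ q in {q : ℝ × ℝ | q.1 ^ 2 + q.2 ^ 2 < 1},
      ENNReal.ofReal (|(((q.1 : ℂ) + (q.2 : ℂ) * Complex.I) ^ k).re| ^ a)) =
    (∫⁻ r in Ioo (0:ℝ) 1, ENNReal.ofReal (r ^ ((k:ℝ) * a + 1))) *
      ∫⁻ θ in Ioo (-π) π, ENNReal.ofReal (|Real.cos ((k:ℝ) * θ)| ^ a) := by
  set g : ℝ × ℝ → ENNReal := fun q =>
    ENNReal.ofReal (|(((q.1 : ℂ) + (q.2 : ℂ) * Complex.I) ^ k).re| ^ a) with hg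
  set D : Set (ℝ × ℝ) := {q : ℝ × ℝ | q.1 ^ 2 + q.2 ^ 2 < 1} with hD
  set T : Set (ℝ × ℝ) := Ioo (0:ℝ) 1 ×ˢ Ioo (-π) π with hT
  have hTmeas : MeasurableSet T := measurableSet_Ioo.prod measurableSet_Ioo
  -- the ae step
  have hDae : (D ∩ polarCoord.source : Set (ℝ × ℝ)) =ᵐ[volume] D := by
    have := ae_eq_set_inter (ae_eq_refl D) polarCoord_source_ae_eq_univ
    simpa using this
  -- the image identification
  have hTsub : T ⊆ polarCoord.target := by
    rintro ⟨r, θ⟩ ⟨hr, hθ⟩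
    exact ⟨hr.1, hθ⟩
  have himg : D ∩ polarCoord.source = polarCoord.symm '' T := by
    ext q
    constructor
    · rintro ⟨hqD, hqs⟩
      have hq' := polarCoord.map_source hqs
      refine ⟨polarCoord q, ?_, polarCoord.left_inv hqs⟩
      rw [polarCoord_target] at hq'
      refine ⟨⟨hq'.1, ?_⟩, hq'.2⟩
      show √(q.1 ^ 2 + q.2 ^ 2) < 1
      rw [Real.sqrt_lt' zero_lt_one, one_pow]
      exact hqD
    · rintro ⟨p, hpT, rfl⟩
      have hpt : p ∈ polarCoord.target := hTsub hpT
      refine ⟨?_, polarCoord.map_target hpt⟩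
      have hsymm : polarCoord.symm p = (p.1 * Real.cos p.2, p.1 * Real.sin p.2) := rfl
      rw [hD, mem_setOf_eq, hsymm]
      dsimp only
      have hsc := Real.sin_sq_add_cos_sq p.2
      have hp1 : 0 < p.1 := hpT.1.1
      have hp2 : p.1 < 1 := hpT.1.2
      have key : (p.1 * Real.cos p.2) ^ 2 + (p.1 * Real.sin p.2) ^ 2
          = p.1 ^ 2 * (Real.sin p.2 ^ 2 + Real.cos p.2 ^ 2) := by ring
      rw [key, hsc, mul_one]
      nlinarith
  set B : ℝ × ℝ → ℝ × ℝ →L[ℝ] ℝ × ℝ := fun p =>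
    LinearMap.toContinuousLinearMap (Matrix.toLin (Module.Basis.finTwoProd ℝ) (Module.Basis.finTwoProd ℝ)
      !![Real.cos p.2, -p.1 * Real.sin p.2; Real.sin p.2, p.1 * Real.cos p.2]) with hB
  have B_det : ∀ p, (B p).det = p.1 := by
    intro p
    conv_rhs => rw [← one_mul p.1, ← Real.cos_sq_add_sin_sq p.2]
    simp only [hB, neg_mul, LinearMap.det_toContinuousLinearMap, LinearMap.det_toLin,
      Matrix.det_fin_two_of, sub_neg_eq_add]
    ring
  have hinj : Set.InjOn polarCoord.symm T := by
    apply polarCoord.symm.injOn.mono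
    rwa [OpenPartialHomeomorph.symm_source]
  calc ∫⁻ q in D, g q
      = ∫⁻ q in (D ∩ polarCoord.source : Set (ℝ × ℝ)), g q := by
        rw [Measure.restrict_congr_set hDae]
    _ = ∫⁻ q in polarCoord.symm '' T, g q := by rw [himg]
    _ = ∫⁻ p in T, ENNReal.ofReal |(B p).det| * g (polarCoord.symm p) :=
        lintegral_image_eq_lintegral_abs_det_fderiv_mul volume hTmeas
          (fun p _ => (hasFDerivAt_polarCoord_symm p).hasFDerivWithinAt) hinj g
    _ = ∫⁻ p in T, ENNReal.ofReal (p.1 ^ ((k:ℝ) * a + 1)) *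
          ENNReal.ofReal (|Real.cos ((k:ℝ) * p.2)| ^ a) := by
        apply setLIntegral_congr_fun hTmeas
        rintro ⟨r, θ⟩ ⟨hr, hθ⟩
        have hr0 : (0:ℝ) < r := hr.1
        beta_reduce
        rw [B_det]
        have hsymm : polarCoord.symm (r, θ) = (r * Real.cos θ, r * Real.sin θ) := rfl
        rw [hsymm, hg]
        dsimp only
        have hz : ((r * Real.cos θ : ℝ) : ℂ) + ((r * Real.sin θ : ℝ) : ℂ) * Complex.I
            = (r : ℂ) * Complex.exp (θ * Complex.I) := by
          rw [Complex.exp_mul_I, ← Complex.ofReal_cos, ← Complex.ofReal_sin]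
          push_cast
          ring
        have hre : ((((r * Real.cos θ : ℝ) : ℂ) + ((r * Real.sin θ : ℝ) : ℂ) * Complex.I) ^ k).re
            = r ^ k * Real.cos ((k:ℝ) * θ) := by
          rw [hz, mul_pow, ← Complex.exp_nat_mul]
          have harg : (k : ℂ) * ((θ : ℂ) * Complex.I) = (((k:ℝ) * θ : ℝ) : ℂ) * Complex.I := by
            push_cast; ring
          rw [harg, show ((r:ℂ)^k) = (((r^k : ℝ)):ℂ) by push_cast; ring,
            Complex.re_ofReal_mul, Complex.exp_ofReal_mul_I_re]
        rw [hre]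
        have habs : |r ^ k * Real.cos ((k:ℝ) * θ)| ^ a
            = r ^ ((k:ℝ) * a) * |Real.cos ((k:ℝ) * θ)| ^ a := by
          rw [abs_mul, abs_of_pos (pow_pos hr0 k),
            Real.mul_rpow (pow_pos hr0 k).le (abs_nonneg _),
            ← Real.rpow_natCast r k, ← Real.rpow_mul hr0.le]
        rw [habs, abs_of_pos hr0, ← ENNReal.ofReal_mul hr0.le, ← mul_assoc,
          show r * r ^ ((k:ℝ) * a) = r ^ ((k:ℝ) * a + 1) by
            rw [Real.rpow_add hr0, Real.rpow_one]; ring,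
          ENNReal.ofReal_mul (Real.rpow_nonneg hr0.le _)]
    _ = (∫⁻ r in Ioo (0:ℝ) 1, ENNReal.ofReal (r ^ ((k:ℝ) * a + 1))) *
          ∫⁻ θ in Ioo (-π) π, ENNReal.ofReal (|Real.cos ((k:ℝ) * θ)| ^ a) := by
        rw [hT, Measure.volume_eq_prod, ← Measure.prod_restrict]
        exact lintegral_prod_mul
          ((measurable_id.pow measurable_const).ennreal_ofReal.aemeasurable)
          (((Real.continuous_cos.measurable.comp
            (measurable_const.mul measurable_id)).abs.pow
            measurable_const).ennreal_ofReal.aemeasurable)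


end ModelWeightAux
end ModelWeightAuxSection

section Main
open Set Real intervalIntegral

/-- **The two-dimensional model computation** in the proof of Lemma 3.1: for the degree-`k`
homogeneous harmonic polynomial `P(x,y) = Re((x+iy)^k)` with `k ≥ 2`, the integral
`∫_{B₁} |P|^a` is finite if and only if `a > -2/k`. -/

theorem model_weight_integrability (k : ℕ) (hk : 2 ≤ k) (a : ℝ) :
    IntegrableOn
      (fun x : EuclideanSpace ℝ (Fin 2) =>
        |(((x 0 : ℂ) + (x 1 : ℂ) * Complex.I) ^ k).re| ^ a)
      (ball (0 : EuclideanSpace ℝ (Fin 2)) 1) ↔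
    -2 / (k : ℝ) < a := by
  have hk0 : k ≠ 0 := by omega
  have hk1 : 1 ≤ k := by omega
  have hkR : (0:ℝ) < k := Nat.cast_pos.mpr (by omega)
  set D : Set (ℝ × ℝ) := {q : ℝ × ℝ | q.1 ^ 2 + q.2 ^ 2 < 1} with hD
  have hDmeas : MeasurableSet D :=
    measurableSet_lt ((measurable_fst.pow measurable_const).add
      (measurable_snd.pow measurable_const)) measurable_const
  set e : EuclideanSpace ℝ (Fin 2) ≃ᵐ ℝ × ℝ :=
    (MeasurableEquiv.toLp 2 (Fin 2 → ℝ)).symm.trans (MeasurableEquiv.finTwoArrow) with he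
  have hep : MeasurePreserving e volume volume :=
    (MeasureTheory.volume_preserving_finTwoArrow ℝ).comp
      (EuclideanSpace.volume_preserving_symm_measurableEquiv_toLp (Fin 2))
  have hball : ball (0 : EuclideanSpace ℝ (Fin 2)) 1 = e ⁻¹' D := by
    ext x
    rw [mem_ball, dist_zero_right, mem_preimage]
    have hex : e x = (x 0, x 1) := rfl
    rw [hex, hD, mem_setOf_eq, EuclideanSpace.norm_eq, Fin.sum_univ_two,
      Real.sqrt_lt' zero_lt_one, one_pow, Real.norm_eq_abs, Real.norm_eq_abs]
    simp [_root_.sq_abs]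
  set G : ℝ × ℝ → ℝ := fun q => |(((q.1 : ℂ) + (q.2 : ℂ) * Complex.I) ^ k).re| ^ a with hGdef
  have hGmeas : Measurable G := by
    apply Measurable.pow ?_ measurable_const
    apply Continuous.measurable
    exact (Complex.continuous_re.comp (((Complex.continuous_ofReal.comp continuous_fst).add
      ((Complex.continuous_ofReal.comp continuous_snd).mul continuous_const)).pow k)).abs
  have hfun : (fun x : EuclideanSpace ℝ (Fin 2) =>
      |(((x 0 : ℂ) + (x 1 : ℂ) * Complex.I) ^ k).re| ^ a) = fun x => G (e x) := rfl
  rw [hfun, hball, ModelWeightAux.integrableOn_iff_lintegral (hGmeas.comp' e.measurable)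
    (fun x _ => Real.rpow_nonneg (abs_nonneg _) _) (e.measurableSet_preimage.mpr hDmeas)]
  have hlin : (∫⁻ x in e ⁻¹' D, ENNReal.ofReal (G (e x))) = ∫⁻ q in D, ENNReal.ofReal (G q) :=
    hep.setLIntegral_comp_preimage_emb e.measurableEmbedding (fun q => ENNReal.ofReal (G q)) D
  rw [hlin, hGdef]
  rw [ModelWeightAux.key_transform k a]
  constructor
  · intro h
    have hpos := ModelWeightAux.angular_lintegral_pos k hk1 a
    have hIr : (∫⁻ r in Set.Ioo (0:ℝ) 1, ENNReal.ofReal (r ^ ((k:ℝ) * a + 1))) < ⊤ := by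
      by_contra hc
      rw [not_lt, top_le_iff] at hc
      rw [hc, ENNReal.top_mul hpos.ne'] at h
      exact absurd h (lt_irrefl _)
    have h1 := (ModelWeightAux.radial_lintegral_lt_top_iff _).mp hIr
    rw [div_lt_iff₀ hkR]
    nlinarith
  · intro ha
    rw [div_lt_iff₀ hkR] at ha
    have ha1 : -1 < a := by
      have h2 : (2:ℝ) ≤ k := by exact_mod_cast hk
      nlinarith
    apply ENNReal.mul_lt_top
    · rw [ModelWeightAux.radial_lintegral_lt_top_iff]
      nlinarith
    · have hang : Measurable fun θ : ℝ => |Real.cos ((k:ℝ) * θ)| ^ a := by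
        apply Measurable.pow ?_ measurable_const
        exact (Real.continuous_cos.comp (continuous_const.mul continuous_id)).abs.measurable
      rw [← ModelWeightAux.integrableOn_iff_lintegral hang
        (fun x _ => Real.rpow_nonneg (abs_nonneg _) _) measurableSet_Ioo]
      exact ModelWeightAux.angular_integrable ha1 k hk0

end Main
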